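/- If κ is an inaccessible cardinal, then there exists a κ-Kurepa subtree T of ^{<κ}κ consisting only of functions with values in {0,1} (i.e., T ⊆ ^{<κ}2) such that the set [T] is not a continuous image of ^κκ. -/

import Mathlib

open Cardinal Set

noncomputable section

namespace GBaire

universe u

/-- The underlying well-ordered set of the cardinal `κ`, i.e. the type of ordinals `< κ`. -/
abbrev K (κ : Cardinal.{u}) : Type u := κ.ord.ToType

/-- The set `^{<κ}κ` of all functions from a proper initial segment of `κ` to `κ`. -/
abbrev PreFun (κ : Cardinal.{u}) : Type u := Σ α : K κ, ({β : K κ // β < α} → K κ)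

variable (κ : Cardinal.{u})

/-- The restriction `x ↾ α` of a function `x ∈ ^κκ` to the initial segment determined by `α`. -/
def resT (x : K κ → K κ) (α : K κ) : PreFun κ := ⟨α, fun β => x β.1⟩

/-- The restriction of `s ∈ ^{<κ}κ` to (the minimum of its domain and) `γ`.  When
`γ ≤ s.1` this is the restriction `s ↾ γ`; otherwise it equals `s`. -/
def cut (s : PreFun κ) (γ : K κ) : PreFun κ :=
  ⟨min γ s.1, fun β => s.2 ⟨β.1, lt_of_lt_of_le β.2 (min_le_right _ _)⟩⟩

/-- A subtree of `^{<κ}κ`: a set of elements of `^{<κ}κ` closed under restrictions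
to smaller ordinals. -/
def IsSubtree (T : Set (PreFun κ)) : Prop :=
  ∀ s ∈ T, ∀ γ : K κ, γ < s.1 → cut κ s γ ∈ T

/-- The `α`-th level `T(α)` of `T`. -/
def level (T : Set (PreFun κ)) (α : K κ) : Set (PreFun κ) := {s ∈ T | s.1 = α}

/-- The set `[T]` of cofinal branches of `T`, i.e. all `x ∈ ^κκ` all of whose
restrictions lie in `T`. -/
def branches (T : Set (PreFun κ)) : Set (K κ → K κ) := {x | ∀ α : K κ, resT κ x α ∈ T}

/-- `T` is a `κ`-Kurepa subtree of `^{<κ}κ`: a subtree all of whose levels are nonempty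
of cardinality `< κ` and with at least `κ⁺` many cofinal branches. -/
def IsKurepa (T : Set (PreFun κ)) : Prop :=
  IsSubtree κ T ∧ (∀ α : K κ, (level κ T α).Nonempty ∧ #(level κ T α) < κ) ∧
    Order.succ κ ≤ #(branches κ T)

/-- The basic open set `N_s = {x ∈ ^κκ | s ⊆ x}`. -/
def Nbhd (s : PreFun κ) : Set (K κ → K κ) := {x | resT κ x s.1 = s}

/-- The topology of the generalized Baire space `^κκ`, generated by the sets `N_s`. -/
def baire : TopologicalSpace (K κ → K κ) :=
  TopologicalSpace.generateFrom {U | ∃ s : PreFun κ, U = Nbhd κ s}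

/-- `X` is a continuous image of `^κκ`: there is a continuous surjection from `^κκ`
onto `X` (with the subspace topology). -/
def IsContImage (X : Set (K κ → K κ)) : Prop :=
  letI := baire κ
  ∃ f : (K κ → K κ) → X, Continuous f ∧ Function.Surjective f

/-- `X` is a retract of `^κκ`: there is a continuous `r : ^κκ → ^κκ` with range
contained in `X` that is the identity on `X`. -/
def IsRetract (X : Set (K κ → K κ)) : Prop :=
  letI := baire κ
  ∃ r : (K κ → K κ) → (K κ → K κ),
    Continuous r ∧ Set.range r ⊆ X ∧ ∀ x ∈ X, r x = x

/-- `y` is an isolated point of `Y ⊆ ^κκ`. -/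
def IsIsolatedIn (Y : Set (K κ → K κ)) (y : K κ → K κ) : Prop :=
  y ∈ Y ∧ ∃ α : K κ, Nbhd κ (resT κ y α) ∩ Y = {y}

/-- `T` is slim: `|T(α)| ≤ |α|` for all sufficiently large `α < κ`. -/
def IsSlim (T : Set (PreFun κ)) : Prop :=
  ∃ α₀ : K κ, ∀ α : K κ, α₀ ≤ α → #(level κ T α) ≤ #{β : K κ // β < α}

/-- `C ⊆ κ` is closed: it contains every least upper bound of a nonempty subset of `C`. -/
def ClosedIn (C : Set (K κ)) : Prop :=
  ∀ A ⊆ C, A.Nonempty → ∀ x : K κ, IsLUB A x → x ∈ C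

/-- `C ⊆ κ` is unbounded in `κ`. -/
def UnboundedIn (C : Set (K κ)) : Prop := ∀ x : K κ, ∃ y ∈ C, x < y

/-- `S ⊆ κ` is stationary in `κ`: it meets every closed unbounded subset of `κ`. -/
def Stationary (S : Set (K κ)) : Prop :=
  ∀ C : Set (K κ), ClosedIn κ C → UnboundedIn κ C → (S ∩ C).Nonempty

/-- `T` is stationary slim: `|T(α)| ≤ |α|` for stationarily many `α < κ`. -/
def StatSlim (T : Set (PreFun κ)) : Prop :=
  Stationary κ {α : K κ | #(level κ T α) ≤ #{β : K κ // β < α}}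

/-- `α` is a limit ordinal (as an element of `κ`): it is neither the least element
nor a successor. -/
def IsLimitElt (α : K κ) : Prop :=
  (∃ β : K κ, β < α) ∧ ∀ β : K κ, β < α → ∃ γ : K κ, β < γ ∧ γ < α

/-- The boundary `∂T` of a subtree `T`: the minimal elements of `^{<κ}κ \ T`. -/
def boundary (T : Set (PreFun κ)) : Set (PreFun κ) :=
  {t | t ∉ T ∧ ∀ γ : K κ, γ < t.1 → cut κ t γ ∈ T}

/-- `T` is superthin: for every limit ordinal `α < κ`, the set of elements of
`T ∪ ∂T` with domain `α` has cardinality `< κ`. -/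
def IsSuperthin (T : Set (PreFun κ)) : Prop :=
  ∀ α : K κ, IsLimitElt κ α → #{s ∈ T ∪ boundary κ T | s.1 = α} < κ

/-- `T` is pruned: every element of `T` has a proper extension in `T`. -/
def IsPruned (T : Set (PreFun κ)) : Prop :=
  ∀ s ∈ T, ∃ t ∈ T, s.1 < t.1 ∧ cut κ t s.1 = s

/-- `T` is `<κ`-closed: the union of every (strictly increasing with respect to proper
end-extension) sequence of elements of `T` indexed by an ordinal `< κ` again lies in `T`.
Here `u` is the union of the sequence `s` iff the domain of `u` is the least upper bound
of the domains of the `s ξ` and every `s ξ` is a restriction of `u`. -/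
def IsLtClosed (T : Set (PreFun κ)) : Prop :=
  ∀ (γ : K κ) (s : {ξ : K κ // ξ < γ} → PreFun κ),
    (∀ ξ ζ : {ξ : K κ // ξ < γ}, ξ < ζ → (s ξ).1 < (s ζ).1 ∧ cut κ (s ζ) (s ξ).1 = s ξ) →
    (∀ ξ, s ξ ∈ T) →
    ∀ u : PreFun κ, IsLUB (Set.range fun ξ => (s ξ).1) u.1 →
      (∀ ξ, cut κ u (s ξ).1 = s ξ) → u ∈ T

/-- `T` contains a Cantor subtree. -/
def HasCantorSubtree (T : Set (PreFun κ)) : Prop :=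
  ∃ (l : ℕ → K κ) (lam : K κ), StrictMono l ∧ IsLUB (Set.range l) lam ∧
    (level κ T lam).Nonempty ∧
    ∃ B ⊆ level κ T lam, ¬ B.Countable ∧
      ∀ n : ℕ, ((fun t => cut κ t (l n)) '' B).Countable

/-- proper end-extension on `^{<κ}κ`. -/
def pext (s t : PreFun κ) : Prop := s.1 < t.1 ∧ cut κ t s.1 = s

/-- A set `A ⊆ ^{<κ}κ`, regarded as a tree under proper end-extension, is trivially
coherent: it is order-isomorphic to a subtree of `^{<λ}2` (for `λ` its height) all of
whose elements `t` satisfy that `t⁻¹{0}` is finite.  (Here the comparison tree is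
realized as a subtree `U` of `^{<κ}κ` taking only the values `0` and `1`, i.e. values
with at most one predecessor, such that each `u ∈ U` takes the value `0`, i.e. the
value with no predecessor, only finitely often.) -/
def TriviallyCoherent (A : Set (PreFun κ)) : Prop :=
  ∃ U : Set (PreFun κ),
    IsSubtree κ U ∧
    (∀ u ∈ U, ∀ β : {b : K κ // b < u.1}, #{γ : K κ // γ < u.2 β} ≤ 1) ∧
    (∀ u ∈ U, {β : {b : K κ // b < u.1} | ¬ ∃ γ : K κ, γ < u.2 β}.Finite) ∧
    ∃ f : A → U, Function.Bijective f ∧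
      ∀ s t : A, pext κ s.1 t.1 ↔ pext κ (f s).1 (f t).1

/-- `T` is locally coherent: each of its proper initial segments `T ∩ ^{<α}κ` is
trivially coherent. -/
def LocallyCoherent (T : Set (PreFun κ)) : Prop :=
  ∀ α : K κ, TriviallyCoherent κ {s ∈ T | s.1 < α}

end GBaire

namespace GBaire

section AuxDev

open Ordinal

variable {κ : Cardinal.{u}}

instance aux_isWellOrder (o : Ordinal.{u}) : IsWellOrder o.ToType (· < ·) := isWellOrder_lt

theorem aux_ord_limit (h : ℵ₀ < κ) : Order.IsSuccLimit κ.ord := Cardinal.isSuccLimit_ord h.le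

theorem aux_K_nonempty (h : ℵ₀ < κ) : Nonempty (K κ) :=
  Ordinal.nonempty_toType_iff.2 (aux_ord_limit h).pos.ne'

theorem aux_mkK : #(K κ) = κ := by rw [Cardinal.mk_toType, Cardinal.card_ord]

/-- enumeration of `K κ` -/
noncomputable def ken (o : Ordinal.{u}) (ho : o < κ.ord) : K κ :=
  Ordinal.enum (α := K κ) (· < ·) ⟨o, by rwa [Ordinal.type_toType]⟩

theorem typein_ken (o : Ordinal.{u}) (ho : o < κ.ord) :
    Ordinal.typein (α := K κ) (· < ·) (ken o ho) = o := Ordinal.typein_enum _ _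

/-- the least element of `K κ` -/
noncomputable def val0 (h : ℵ₀ < κ) : K κ := ken 0 (aux_ord_limit h).pos

/-- the successor function on `K κ` -/
noncomputable def succK (h : ℵ₀ < κ) (a : K κ) : K κ :=
  ken (Ordinal.typein (α := K κ) (· < ·) a + 1) ((aux_ord_limit h).succ_lt (Ordinal.typein_lt_self a))

theorem typein_succK (h : ℵ₀ < κ) (a : K κ) :
    Ordinal.typein (α := K κ) (· < ·) (succK h a) = Ordinal.typein (α := K κ) (· < ·) a + 1 :=
  typein_ken _ _

theorem typein_val0 (h : ℵ₀ < κ) : Ordinal.typein (α := K κ) (· < ·) (val0 h) = 0 :=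
  typein_ken _ _

theorem lt_succK (h : ℵ₀ < κ) (a : K κ) : a < succK h a := by
  rw [← Ordinal.typein_lt_typein (α := K κ) (· < ·), typein_succK, Ordinal.add_one_eq_succ]
  exact Order.lt_succ _

theorem lt_succK_iff (h : ℵ₀ < κ) {a b : K κ} : b < succK h a ↔ b ≤ a := by
  rw [← Ordinal.typein_lt_typein (α := K κ) (· < ·), typein_succK, Ordinal.add_one_eq_succ,
    Order.lt_succ_iff, Ordinal.typein_le_typein']

theorem val0_le (h : ℵ₀ < κ) (a : K κ) : val0 h ≤ a := by
  rw [← Ordinal.typein_le_typein', typein_val0]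
  exact zero_le

theorem eq_val0_of_lt_val1 (h : ℵ₀ < κ) {a : K κ} (ha : a < succK h (val0 h)) : a = val0 h :=
  le_antisymm ((lt_succK_iff h).1 ha) (val0_le h a)

theorem val0_ne_val1 (h : ℵ₀ < κ) : val0 h ≠ succK h (val0 h) := (lt_succK h _).ne

/-- a bounding principle : fewer than `κ` elements of `K κ` are bounded. -/
theorem aux_bddK (hreg : κ.IsRegular) (hℵ : ℵ₀ < κ) {ι : Type u} (hι : #ι < κ)
    (g : ι → K κ) : ∃ β : K κ, ∀ i, g i < β := by
  have h1 : (⨆ i, Ordinal.typein (α := K κ) (· < ·) (g i)) < κ.ord :=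
    Ordinal.iSup_lt_ord (by rwa [hreg.cof_eq]) fun i => Ordinal.typein_lt_self _
  refine ⟨ken _ ((aux_ord_limit hℵ).succ_lt h1), fun i => ?_⟩
  rw [← Ordinal.typein_lt_typein (α := K κ) (· < ·), typein_ken]
  exact lt_of_le_of_lt
    (Ordinal.le_iSup (fun i => Ordinal.typein (α := K κ) (· < ·) (g i)) i) (Order.lt_succ _)

theorem aux_mk_Iio (α : K κ) : #{β : K κ // β < α} < κ := Cardinal.mk_Iio_ord_toType α

/-- `κ` is inaccessible so `λ^μ < κ` for `λ, μ < κ`. -/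
theorem aux_power_lt (hin : κ.IsInaccessible) {a b : Cardinal.{u}} (ha : a < κ) (hb : b < κ) :
    a ^ b < κ := by
  obtain ⟨hℵ, hreg, hsl⟩ := isInaccessible_def.1 hin
  calc a ^ b ≤ (2 ^ a) ^ b := Cardinal.power_le_power_right (Cardinal.cantor a).le
    _ = 2 ^ (a * b) := by rw [← Cardinal.power_mul]
    _ < κ := hsl.two_power_lt (Cardinal.mul_lt_of_lt hℵ.le ha hb)

theorem aux_arrow_le (hin : κ.IsInaccessible) {ι : Type u} (hι : #ι < κ) :
    #(ι → K κ) ≤ κ := by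
  classical
  obtain ⟨hℵ, hreg, hsl⟩ := isInaccessible_def.1 hin
  have hsurj : Function.Surjective
      (fun p : Σ β : K κ, (ι → {γ : K κ // γ < β}) => (fun i => (p.2 i).1 : ι → K κ)) := by
    intro g
    obtain ⟨β, hβ⟩ := aux_bddK hreg hℵ hι g
    exact ⟨⟨β, fun i => ⟨g i, hβ i⟩⟩, rfl⟩
  calc #(ι → K κ) ≤ #(Σ β : K κ, (ι → {γ : K κ // γ < β})) := Cardinal.mk_le_of_surjective hsurj
    _ = Cardinal.sum (fun β : K κ => #(ι → {γ : K κ // γ < β})) := Cardinal.mk_sigma _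
    _ ≤ Cardinal.sum (fun _ : K κ => κ) := by
        refine Cardinal.sum_le_sum _ _ fun β => ?_
        rw [Cardinal.mk_arrow, Cardinal.lift_id, Cardinal.lift_id]
        exact (aux_power_lt hin (aux_mk_Iio β) hι).le
    _ = #(K κ) * κ := Cardinal.sum_const' _ _
    _ = κ := by rw [aux_mkK, Cardinal.mul_eq_self hℵ.le]

theorem aux_mk_preFun (hin : κ.IsInaccessible) : #(PreFun κ) ≤ κ := by
  calc #(PreFun κ) = Cardinal.sum (fun α : K κ => #({β : K κ // β < α} → K κ)) :=
        Cardinal.mk_sigma _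
    _ ≤ Cardinal.sum (fun _ : K κ => κ) :=
        Cardinal.sum_le_sum _ _ fun α => aux_arrow_le hin (aux_mk_Iio α)
    _ = #(K κ) * κ := Cardinal.sum_const' _ _
    _ = κ := by rw [aux_mkK, Cardinal.mul_eq_self hin.1.le]

/-! ### basic `PreFun` lemmas -/

theorem pf_ext {s t : PreFun κ} (h1 : s.1 = t.1)
    (h2 : ∀ (β : K κ) (hs : β < s.1) (ht : β < t.1), s.2 ⟨β, hs⟩ = t.2 ⟨β, ht⟩) : s = t := by
  obtain ⟨a, f⟩ := s
  obtain ⟨b, g⟩ := t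
  dsimp at h1
  subst h1
  have : f = g := funext fun β => h2 β.1 β.2 β.2
  rw [this]

theorem pf_val {s t : PreFun κ} (h : s = t) (β : K κ) (hs : β < s.1) (ht : β < t.1) :
    s.2 ⟨β, hs⟩ = t.2 ⟨β, ht⟩ := by subst h; rfl

theorem resT_agree_mono {x y : K κ → K κ} {α β : K κ} (hle : α ≤ β)
    (h : resT κ y β = resT κ x β) : resT κ y α = resT κ x α :=
  pf_ext rfl fun γ hγ _ => pf_val h γ (lt_of_lt_of_le hγ hle) (lt_of_lt_of_le hγ hle)

theorem mem_Nbhd_resT {x y : K κ → K κ} {α : K κ} :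
    y ∈ Nbhd κ (resT κ x α) ↔ resT κ y α = resT κ x α := Iff.rfl

theorem self_mem_Nbhd_resT (x : K κ → K κ) (α : K κ) : x ∈ Nbhd κ (resT κ x α) := rfl

theorem Nbhd_mono (x : K κ → K κ) {α β : K κ} (hle : α ≤ β) :
    Nbhd κ (resT κ x β) ⊆ Nbhd κ (resT κ x α) := fun _ hy => resT_agree_mono hle hy

theorem cut_resT {x : K κ → K κ} {α γ : K κ} (h : γ ≤ α) :
    cut κ (resT κ x α) γ = resT κ x γ :=
  pf_ext (min_eq_left h) fun β h1 h2 => rfl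

/-- extend a `PreFun` to a total function by a default value -/
noncomputable def extF (s : PreFun κ) (d : K κ) : K κ → K κ := fun β =>
  if h : β < s.1 then s.2 ⟨β, h⟩ else d

theorem extF_mem (s : PreFun κ) (d : K κ) : extF s d ∈ Nbhd κ s := by
  show resT κ (extF s d) s.1 = s
  refine pf_ext rfl fun β h1 h2 => ?_
  show extF s d β = s.2 ⟨β, h2⟩
  simp only [extF, dif_pos h2]

theorem nbhd_coh {s t : PreFun κ} (hsub : Nbhd κ t ⊆ Nbhd κ s) (d : K κ) (β : K κ)
    (hs : β < s.1) (ht : β < t.1) : s.2 ⟨β, hs⟩ = t.2 ⟨β, ht⟩ := by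
  have h1 : resT κ (extF t d) s.1 = s := hsub (extF_mem t d)
  have h2 : extF t d β = s.2 ⟨β, hs⟩ := pf_val h1 β hs hs
  rw [← h2]
  show extF t d β = t.2 ⟨β, ht⟩
  simp only [extF, dif_pos ht]

/-- union of an `ω`-chain of basic conditions -/
noncomputable def xstar (d : K κ) (s : ℕ → PreFun κ) : K κ → K κ := fun β => by
  classical exact
    if h : ∃ n, β < (s n).1 then (s (Nat.find h)).2 ⟨β, Nat.find_spec h⟩ else d

theorem xstar_mem (d : K κ) (s : ℕ → PreFun κ)
    (hsub : ∀ m n, m ≤ n → Nbhd κ (s n) ⊆ Nbhd κ (s m)) (n : ℕ) :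
    xstar d s ∈ Nbhd κ (s n) := by
  classical
  show resT κ (xstar d s) (s n).1 = s n
  refine pf_ext rfl fun β h1 h2 => ?_
  show xstar d s β = (s n).2 ⟨β, h2⟩
  have hex : ∃ m, β < (s m).1 := ⟨n, h2⟩
  simp only [xstar, dif_pos hex]
  rcases le_total (Nat.find hex) n with hmn | hmn
  · exact nbhd_coh (hsub _ _ hmn) d β (Nat.find_spec hex) h2
  · exact (nbhd_coh (hsub _ _ hmn) d β h2 (Nat.find_spec hex)).symm

/-! ### topology lemmas -/

theorem nbhd_of_open (hℵ : ℵ₀ < κ) {U : Set (K κ → K κ)} (hU : @IsOpen _ (baire κ) U)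
    {x : K κ → K κ} (hx : x ∈ U) : ∃ α : K κ, Nbhd κ (resT κ x α) ⊆ U := by
  have hU' : TopologicalSpace.GenerateOpen {U | ∃ s : PreFun κ, U = Nbhd κ s} U := hU
  clear hU
  have H : ∀ V, TopologicalSpace.GenerateOpen {U | ∃ s : PreFun κ, U = Nbhd κ s} V →
      ∀ y : K κ → K κ, y ∈ V → ∃ α : K κ, Nbhd κ (resT κ y α) ⊆ V := by
    intro V hV
    induction hV with
    | basic W hW =>
      obtain ⟨s, rfl⟩ := hW
      intro y hy
      refine ⟨s.1, fun w hw => ?_⟩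
      show resT κ w s.1 = s
      calc resT κ w s.1 = resT κ y s.1 := hw
        _ = s := hy
    | univ => exact fun y _ => ⟨(aux_K_nonempty hℵ).some, fun _ _ => trivial⟩
    | inter V W _ _ ihV ihW =>
      intro y hy
      obtain ⟨α, hα⟩ := ihV y hy.1
      obtain ⟨β, hβ⟩ := ihW y hy.2
      exact ⟨max α β, fun w hw =>
        ⟨hα (Nbhd_mono y (le_max_left _ _) hw), hβ (Nbhd_mono y (le_max_right _ _) hw)⟩⟩
    | sUnion C _ ih =>
      intro y hy
      obtain ⟨V, hVC, hyV⟩ := hy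
      obtain ⟨α, hα⟩ := ih V hVC y hyV
      exact ⟨α, hα.trans (Set.subset_sUnion_of_mem hVC)⟩
  exact H U hU' x hx

theorem isOpen_coord (hℵ : ℵ₀ < κ) (γ v : K κ) :
    @IsOpen _ (baire κ) {y : K κ → K κ | y γ = v} := by
  have hkey : {y : K κ → K κ | y γ = v} =
      ⋃₀ {U | ∃ x : K κ → K κ, x γ = v ∧ U = Nbhd κ (resT κ x (succK hℵ γ))} := by
    ext y
    constructor
    · intro hy
      exact ⟨Nbhd κ (resT κ y (succK hℵ γ)), ⟨y, hy, rfl⟩, self_mem_Nbhd_resT y _⟩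
    · rintro ⟨U, ⟨x, hxγ, rfl⟩, hyU⟩
      have := pf_val (mem_Nbhd_resT.1 hyU) γ (lt_succK hℵ γ) (lt_succK hℵ γ)
      show y γ = v
      rw [show y γ = x γ from this, hxγ]
  rw [hkey]
  exact TopologicalSpace.GenerateOpen.sUnion _ fun V hV => by
    obtain ⟨x, _, rfl⟩ := hV
    exact TopologicalSpace.GenerateOpen.basic _ ⟨_, rfl⟩

theorem cont_decides (hℵ : ℵ₀ < κ) {g : (K κ → K κ) → (K κ → K κ)}
    (hg : @Continuous _ _ (baire κ) (baire κ) g) (x : K κ → K κ) (γ : K κ) :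
    ∃ α : K κ, ∀ y, resT κ y α = resT κ x α → g y γ = g x γ := by
  have hop : @IsOpen _ (baire κ) (g ⁻¹' {y : K κ → K κ | y γ = g x γ}) :=
    @Continuous.isOpen_preimage _ _ (baire κ) (baire κ) g hg _ (isOpen_coord hℵ γ (g x γ))
  obtain ⟨α, hα⟩ := nbhd_of_open hℵ hop (show g x γ = g x γ from rfl)
  exact ⟨α, fun y hy => hα (mem_Nbhd_resT.2 hy)⟩

/-! ### coding well-founded relations -/

/-- a pairing bijection on `K κ` -/
noncomputable def cdEquiv (hℵ : ℵ₀ < κ) : (K κ × K κ) ≃ K κ :=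
  Classical.choice (Cardinal.eq.1 (show #(K κ × K κ) = #(K κ) by
    rw [Cardinal.mk_prod, Cardinal.lift_id, aux_mkK, Cardinal.mul_eq_self hℵ.le]))

/-- a pairing injection on `K κ` -/
noncomputable def cdf (hℵ : ℵ₀ < κ) : K κ × K κ → K κ := cdEquiv hℵ

theorem cdf_inj (hℵ : ℵ₀ < κ) : Function.Injective (cdf hℵ) :=
  (cdEquiv hℵ).injective

/-- the binary relation coded by `z : ^κκ` -/
def relz (hℵ : ℵ₀ < κ) (z : K κ → K κ) (a b : K κ) : Prop :=
  z (cdf hℵ (a, b)) = succK hℵ (val0 hℵ)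

open Classical in
/-- the code of a binary relation -/
noncomputable def chi (hℵ : ℵ₀ < κ) (R : K κ → K κ → Prop) : K κ → K κ := fun γ =>
  if ∃ p : K κ × K κ, γ = cdf hℵ p ∧ R p.1 p.2 then succK hℵ (val0 hℵ) else val0 hℵ

theorem chi_spec (hℵ : ℵ₀ < κ) (R : K κ → K κ → Prop) (a b : K κ) :
    relz hℵ (chi hℵ R) a b ↔ R a b := by
  classical
  unfold relz chi
  constructor
  · intro h
    by_contra hR
    have hcond : ¬ ∃ p : K κ × K κ, cdf hℵ (a, b) = cdf hℵ p ∧ R p.1 p.2 := by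
      rintro ⟨p, hp, hRp⟩
      obtain rfl := cdf_inj hℵ hp
      exact hR hRp
    rw [if_neg hcond] at h
    exact val0_ne_val1 hℵ h
  · intro hR
    rw [if_pos ⟨(a, b), rfl, hR⟩]

theorem chi_vals (hℵ : ℵ₀ < κ) (R : K κ → K κ → Prop) (γ : K κ) :
    chi hℵ R γ = val0 hℵ ∨ chi hℵ R γ = succK hℵ (val0 hℵ) := by
  classical
  unfold chi
  split
  · exact Or.inr rfl
  · exact Or.inl rfl

/-- the tree of codes of well-founded relations -/
def Xset (hℵ : ℵ₀ < κ) : Set (K κ → K κ) :=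
  {z | (∀ γ, z γ = val0 hℵ ∨ z γ = succK hℵ (val0 hℵ)) ∧ WellFounded (relz hℵ z)}

def TT (hℵ : ℵ₀ < κ) : Set (PreFun κ) := {s | ∃ z ∈ Xset hℵ, resT κ z s.1 = s}

theorem Xset_sub_branches (hℵ : ℵ₀ < κ) : Xset hℵ ⊆ branches κ (TT hℵ) :=
  fun z hz _ => ⟨z, hz, rfl⟩

theorem no_desc {α : Type*} {r : α → α → Prop} (h : WellFounded r) (f : ℕ → α) :
    ¬ ∀ n, r (f (n + 1)) (f n) := by
  intro hf
  obtain ⟨n, hn⟩ := h.min_mem (Set.range f) ⟨f 0, 0, rfl⟩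
  exact h.not_lt_min (Set.range f) ⟨n + 1, rfl⟩ (hn ▸ hf n)

theorem wf_of_no_desc {α : Type*} {r : α → α → Prop}
    (h : ∀ f : ℕ → α, ¬ ∀ n, r (f (n + 1)) (f n)) : WellFounded r := by
  by_contra hwf
  have h1 : ∃ a, ¬ Acc r a := by
    by_contra h2
    push_neg at h2
    exact hwf ⟨fun a => h2 a⟩
  obtain ⟨a0, ha0⟩ := h1
  have step : ∀ a, ¬ Acc r a → ∃ b, r b a ∧ ¬ Acc r b := by
    intro a ha
    by_contra h2
    push_neg at h2
    exact ha (Acc.intro a h2)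
  choose nxt hnxt1 hnxt2 using step
  let F : {a // ¬ Acc r a} → {a // ¬ Acc r a} := fun p => ⟨nxt p.1 p.2, hnxt2 p.1 p.2⟩
  refine h (fun n => (F^[n] ⟨a0, ha0⟩).1) fun n => ?_
  show r (F^[n + 1] ⟨a0, ha0⟩).1 (F^[n] ⟨a0, ha0⟩).1
  rw [Function.iterate_succ_apply' F n _]
  exact hnxt1 _ _

theorem branch_wf (hreg : κ.IsRegular) (hℵ : ℵ₀ < κ) {z : K κ → K κ}
    (hz : z ∈ branches κ (TT hℵ)) : WellFounded (relz hℵ z) := by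
  refine wf_of_no_desc fun a ha => ?_
  obtain ⟨β, hβ⟩ := aux_bddK hreg hℵ (ι := ULift ℕ)
    (by rw [Cardinal.mk_uLift, Cardinal.mk_nat, Cardinal.lift_aleph0]; exact hℵ)
    (fun n => cdf hℵ (a (n.down + 1), a n.down))
  obtain ⟨w, hwX, hw⟩ := hz β
  have hwrel : ∀ n : ℕ, relz hℵ w (a (n + 1)) (a n) := by
    intro n
    have h1 : w (cdf hℵ (a (n + 1), a n)) = z (cdf hℵ (a (n + 1), a n)) :=
      pf_val hw _ (hβ ⟨n⟩) (hβ ⟨n⟩)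
    show w (cdf hℵ (a (n + 1), a n)) = _
    rw [h1]
    exact ha n
  exact no_desc hwX.2 a hwrel

/-! ### `TT` is a binary Kurepa tree -/

theorem TT_subtree (hℵ : ℵ₀ < κ) : IsSubtree κ (TT hℵ) := by
  rintro s ⟨z, hz, hzs⟩ γ hγ
  have h2 : cut κ s γ = resT κ z γ := by
    rw [← hzs]
    exact cut_resT (le_of_lt hγ)
  rw [h2]
  exact ⟨z, hz, rfl⟩

theorem wf_false : WellFounded (fun _ _ : K κ => False) :=
  ⟨fun a => Acc.intro a fun _ h => h.elim⟩

theorem chi_false_mem (hℵ : ℵ₀ < κ) : chi hℵ (fun _ _ => False) ∈ Xset hℵ := by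
  refine ⟨chi_vals hℵ _, ?_⟩
  constructor
  intro a
  exact Acc.intro a fun b hb => ((chi_spec hℵ _ b a).1 hb).elim

theorem TT_level_nonempty (hℵ : ℵ₀ < κ) (α : K κ) : (level κ (TT hℵ) α).Nonempty :=
  ⟨resT κ (chi hℵ (fun _ _ => False)) α, ⟨chi hℵ _, chi_false_mem hℵ, rfl⟩, rfl⟩

theorem mem_TT_vals (hℵ : ℵ₀ < κ) {s : PreFun κ} (hs : s ∈ TT hℵ) (β : K κ) (hβ : β < s.1) :
    s.2 ⟨β, hβ⟩ = val0 hℵ ∨ s.2 ⟨β, hβ⟩ = succK hℵ (val0 hℵ) := by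
  obtain ⟨z, hz, hzs⟩ := hs
  have := pf_val hzs β hβ hβ
  rw [← this]
  exact hz.1 β

theorem TT_level_card (hin : κ.IsInaccessible) (α : K κ) :
    #(level κ (TT (hin.1)) α) < κ := by
  have hF : Function.Injective (fun s : level κ (TT hin.1) α =>
      (fun β : {β : K κ // β < α} =>
        (s.1.2 ⟨β.1, by rw [s.2.2]; exact β.2⟩ = succK hin.1 (val0 hin.1) : Prop))) := by
    rintro ⟨s, hsT, hsα⟩ ⟨t, htT, htα⟩ h
    apply Subtype.ext
    refine pf_ext (hsα.trans htα.symm) fun β hs ht => ?_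
    have hβα : β < α := by rw [← hsα]; exact hs
    have h1 := congrFun h ⟨β, hβα⟩
    simp only at h1
    rcases mem_TT_vals hin.1 hsT β hs with h2 | h2 <;>
      rcases mem_TT_vals hin.1 htT β ht with h3 | h3
    · rw [h2, h3]
    · rw [h2] at h1 ⊢
      rw [h3] at h1 ⊢
      exact absurd (h1.symm ▸ rfl : val0 hin.1 = succK hin.1 (val0 hin.1)) (val0_ne_val1 hin.1)
    · rw [h2] at h1 ⊢
      rw [h3] at h1 ⊢
      exact absurd (h1 ▸ rfl : val0 hin.1 = succK hin.1 (val0 hin.1)) (val0_ne_val1 hin.1)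
    · rw [h2, h3]
  calc #(level κ (TT hin.1) α) ≤ #({β : K κ // β < α} → Prop) := Cardinal.mk_le_of_injective hF
    _ = 2 ^ #{β : K κ // β < α} := by
        rw [Cardinal.mk_arrow, Cardinal.mk_Prop]
        simp
    _ < κ := hin.isStrongLimit.two_power_lt (aux_mk_Iio α)

/-- relation coding a subset : `b R a` iff `a = succ b ∧ b ∈ A` -/
def AR (hℵ : ℵ₀ < κ) (A : Set (K κ)) : K κ → K κ → Prop :=
  fun b a => a = succK hℵ b ∧ b ∈ A

theorem AR_wf (hℵ : ℵ₀ < κ) (A : Set (K κ)) : WellFounded (AR hℵ A) :=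
  Subrelation.wf (fun {b a} h => h.1 ▸ lt_succK hℵ b) (wellFounded_lt)

theorem chi_AR_mem (hℵ : ℵ₀ < κ) (A : Set (K κ)) : chi hℵ (AR hℵ A) ∈ Xset hℵ := by
  refine ⟨chi_vals hℵ _, ?_⟩
  have h : ∀ a b, relz hℵ (chi hℵ (AR hℵ A)) a b → AR hℵ A a b :=
    fun a b hab => (chi_spec hℵ _ a b).1 hab
  exact Subrelation.wf (fun {a b} hab => h a b hab) (AR_wf hℵ A)

theorem TT_branches_card (hin : κ.IsInaccessible) :
    Order.succ κ ≤ #(branches κ (TT hin.1)) := by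
  have hinj : Function.Injective (fun A : Set (K κ) =>
      (⟨chi hin.1 (AR hin.1 A), Xset_sub_branches hin.1 (chi_AR_mem hin.1 A)⟩ :
        branches κ (TT hin.1))) := by
    intro A B h
    have h1 : chi hin.1 (AR hin.1 A) = chi hin.1 (AR hin.1 B) := congrArg Subtype.val h
    ext a
    constructor
    · intro ha
      have h2 : relz hin.1 (chi hin.1 (AR hin.1 A)) a (succK hin.1 a) :=
        (chi_spec hin.1 _ _ _).2 ⟨rfl, ha⟩
      rw [h1] at h2
      exact ((chi_spec hin.1 _ _ _).1 h2).2
    · intro ha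
      have h2 : relz hin.1 (chi hin.1 (AR hin.1 B)) a (succK hin.1 a) :=
        (chi_spec hin.1 _ _ _).2 ⟨rfl, ha⟩
      rw [← h1] at h2
      exact ((chi_spec hin.1 _ _ _).1 h2).2
  calc Order.succ κ ≤ 2 ^ κ := Order.succ_le_of_lt (Cardinal.cantor κ)
    _ = #(Set (K κ)) := by rw [Cardinal.mk_set, aux_mkK]
    _ ≤ #(branches κ (TT hin.1)) := Cardinal.mk_le_of_injective hinj

theorem TT_binary (hℵ : ℵ₀ < κ) : ∀ s ∈ TT hℵ, ∀ β : {b : K κ // b < s.1},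
    #{γ : K κ // γ < s.2 β} ≤ 1 := by
  intro s hs β
  rw [Cardinal.le_one_iff_subsingleton]
  constructor
  rintro ⟨γ1, h1⟩ ⟨γ2, h2⟩
  rcases mem_TT_vals hℵ hs β.1 β.2 with hv | hv
  · rw [show (β : {b : K κ // b < s.1}) = ⟨β.1, β.2⟩ from rfl, hv] at h1
    exact absurd h1 (not_lt.2 (val0_le hℵ γ1))
  · rw [show (β : {b : K κ // b < s.1}) = ⟨β.1, β.2⟩ from rfl, hv] at h1 h2
    have := (eq_val0_of_lt_val1 hℵ h1).trans (eq_val0_of_lt_val1 hℵ h2).symm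
    exact Subtype.ext this

/-! ### rank bounds -/

theorem rank_lt_of_card (hℵ : ℵ₀ < κ) {α : Type u} {r : α → α → Prop}
    (hwf : WellFounded r) (hcard : #α ≤ κ) (a : α) :
    (hwf.apply a).rank < (Order.succ κ).ord := by
  induction a using hwf.induction with
  | _ a IH =>
    rw [Acc.rank_eq]
    refine Ordinal.iSup_lt_ord ?_ ?_
    · rw [(Cardinal.isRegular_succ hℵ.le).cof_eq]
      exact lt_of_le_of_lt ((Cardinal.mk_subtype_le _).trans hcard) (Order.lt_succ κ)
    · rintro ⟨b, hb⟩
      have hlim : Order.IsSuccLimit ((Order.succ κ).ord) :=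
        Cardinal.isSuccLimit_ord (hℵ.le.trans (Order.le_succ κ))
      exact hlim.succ_lt (IH b hb)

theorem rank_congr {α : Type u} {r r' : α → α → Prop} (h : r = r')
    (h1 : WellFounded r) (h2 : WellFounded r') (a : α) :
    (h1.apply a).rank = (h2.apply a).rank := by subst h; rfl

theorem TT_not_contImage (hin : κ.IsInaccessible) :
    ¬ IsContImage κ (branches κ (TT hin.1)) := by
  obtain ⟨hℵ, hreg, hsl⟩ := isInaccessible_def.1 hin
  intro hcont
  obtain ⟨f, hfc, hfs⟩ := hcont
  set g : (K κ → K κ) → K κ → K κ := fun y => (f y).1 with hgdef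
  have hgc : @Continuous _ _ (baire κ) (baire κ) g := by
    letI := baire κ
    exact continuous_subtype_val.comp hfc
  have hgmem : ∀ y, g y ∈ branches κ (TT hℵ) := fun y => (f y).2
  -- the relation of decided steps
  set R : (K κ × PreFun κ) → (K κ × PreFun κ) → Prop := fun q p =>
    Nbhd κ q.2 ⊆ Nbhd κ p.2 ∧ (∀ y ∈ Nbhd κ q.2, relz hℵ (g y) q.1 p.1) with hRdef
  have hRwf : WellFounded R := by
    refine wf_of_no_desc fun q hq => ?_
    have hsub : ∀ m n : ℕ, m ≤ n → Nbhd κ (q n).2 ⊆ Nbhd κ (q m).2 := by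
      intro m n hmn
      induction n, hmn using Nat.le_induction with
      | base => exact fun _ h => h
      | succ n hmn ih => exact fun y hy => ih ((hq n).1 hy)
    have hx : ∀ n, xstar (val0 hℵ) (fun n => (q n).2) ∈ Nbhd κ (q n).2 :=
      xstar_mem (val0 hℵ) _ hsub
    have hdesc : ∀ n, relz hℵ (g (xstar (val0 hℵ) (fun n => (q n).2))) (q (n+1)).1 (q n).1 :=
      fun n => (hq n).2 _ (hx (n+1))
    exact no_desc (branch_wf hreg hℵ (hgmem _)) (fun n => (q n).1) hdesc
  -- rank bounds
  have hcard : #(K κ × PreFun κ) ≤ κ := by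
    rw [Cardinal.mk_prod, Cardinal.lift_id, Cardinal.lift_id, aux_mkK]
    calc κ * #(PreFun κ) ≤ κ * κ := mul_le_mul_right (aux_mk_preFun hin) κ
      _ = κ := Cardinal.mul_eq_self hℵ.le
  have hrank : ∀ p, (hRwf.apply p).rank < (Order.succ κ).ord :=
    rank_lt_of_card hℵ hRwf hcard
  set Λ : Ordinal := ⨆ p : K κ × PreFun κ, Order.succ ((hRwf.apply p).rank) with hΛdef
  have hΛ : Λ < (Order.succ κ).ord := by
    refine Ordinal.iSup_lt_ord ?_ fun p => ?_
    · rw [(Cardinal.isRegular_succ hℵ.le).cof_eq]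
      exact hcard.trans_lt (Order.lt_succ κ)
    · exact (Cardinal.isSuccLimit_ord (hℵ.le.trans (Order.le_succ κ))).succ_lt (hrank p)
  -- comparison : ranks in realized branches are bounded by ranks of R
  have L1 : ∀ x : K κ → K κ, ∀ a : K κ, ∀ α : K κ,
      ((branch_wf hreg hℵ (hgmem x)).apply a).rank ≤ (hRwf.apply (a, resT κ x α)).rank := by
    intro x a
    induction a using (branch_wf hreg hℵ (hgmem x)).induction with
    | _ a IH =>
      intro α
      rw [Acc.rank_eq]
      refine Ordinal.iSup_le fun i => ?_
      obtain ⟨a', ha'⟩ := i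
      obtain ⟨α₁, hα₁⟩ := cont_decides hℵ hgc x (cdf hℵ (a', a))
      set α' := succK hℵ (max α α₁) with hα'def
      have hstep : R (a', resT κ x α') (a, resT κ x α) := by
        constructor
        · exact Nbhd_mono x ((le_max_left _ _).trans (lt_succK hℵ _).le)
        · intro y hy
          show g y (cdf hℵ (a', a)) = succK hℵ (val0 hℵ)
          rw [hα₁ y (resT_agree_mono ((le_max_right _ _).trans (lt_succK hℵ _).le) hy)]
          exact ha'
      exact Order.succ_le_of_lt (lt_of_le_of_lt (IH a' ha' α')
        (Acc.rank_lt_of_rel (hRwf.apply _) hstep))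
  have hbound : ∀ x (a : K κ), ((branch_wf hreg hℵ (hgmem x)).apply a).rank < Λ := by
    intro x a
    refine (L1 x a (aux_K_nonempty hℵ).some).trans_lt ?_
    exact lt_of_lt_of_le (Order.lt_succ _)
      (Ordinal.le_iSup (fun p => Order.succ ((hRwf.apply p).rank))
        (a, resT κ x (aux_K_nonempty hℵ).some))
  -- a branch of rank at least Λ
  have hΛcard : Λ.card ≤ κ := Order.lt_succ_iff.1 (Cardinal.lt_ord.1 hΛ)
  set Λ' : Ordinal := κ.ord + Λ + 1 with hΛ'def
  have hΛ'card : Λ'.card = κ := by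
    show ((κ.ord + Λ) + 1).card = κ
    rw [Ordinal.card_add, Ordinal.card_add, Ordinal.card_one, Cardinal.card_ord,
      Cardinal.add_eq_left hℵ.le hΛcard,
      Cardinal.add_eq_left hℵ.le (le_of_lt (lt_of_lt_of_le Cardinal.one_lt_aleph0 hℵ.le))]
  have hE : Nonempty (K κ ≃ Λ'.ToType) :=
    Cardinal.eq.1 (by rw [aux_mkK, Cardinal.mk_toType, hΛ'card])
  obtain ⟨e⟩ := hE
  set Re : K κ → K κ → Prop := fun a b => e a < e b with hRedef
  haveI hwoRe : IsWellOrder (K κ) Re :=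
    RelEmbedding.isWellOrder (RelEmbedding.preimage e.toEmbedding (· < ·))
  have htype : Ordinal.type Re = Λ' := by
    rw [← Ordinal.type_toType Λ']
    exact Ordinal.type_preimage (α := Λ'.ToType) (· < ·) e
  have hΛlt : Λ < Ordinal.type Re := by
    rw [htype]
    refine lt_of_le_of_lt (le_add_self (a := Λ) (b := κ.ord)) ?_
    show κ.ord + Λ < κ.ord + Λ + 1
    rw [Ordinal.add_one_eq_succ]
    exact Order.lt_succ _
  set aΛ : K κ := Ordinal.enum Re ⟨Λ, hΛlt⟩ with haΛdef
  have htyaΛ : Ordinal.typein Re aΛ = Λ := Ordinal.typein_enum _ _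
  have hReWf : WellFounded Re := hwoRe.toIsWellFounded.wf
  have hrelchi : relz hℵ (chi hℵ Re) = Re := by
    funext a b
    exact propext (chi_spec hℵ Re a b)
  have hXe : chi hℵ Re ∈ Xset hℵ := ⟨chi_vals hℵ Re, by rw [hrelchi]; exact hReWf⟩
  obtain ⟨x, hx⟩ := hfs ⟨chi hℵ Re, Xset_sub_branches hℵ hXe⟩
  have hgx : g x = chi hℵ Re := congrArg Subtype.val hx
  have hrankRe : ∀ (hw : WellFounded Re), (hw.apply aΛ).rank = Λ := by
    intro hw
    have h1 : IsWellFounded.rank Re aΛ = Ordinal.typein Re aΛ :=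
      congrFun (IsWellFounded.rank_eq_typein Re) aΛ
    exact (show (hw.apply aΛ).rank = IsWellFounded.rank Re aΛ from rfl).trans
      (h1.trans htyaΛ)
  have hrel2 : relz hℵ (g x) = Re := by rw [hgx]; exact hrelchi
  have key : ((branch_wf hreg hℵ (hgmem x)).apply aΛ).rank = Λ := by
    have hW : WellFounded (relz hℵ (g x)) := branch_wf hreg hℵ (hgmem x)
    have hW' : WellFounded Re := hrel2 ▸ hW
    exact (rank_congr hrel2 (branch_wf hreg hℵ (hgmem x)) hW' aΛ).trans (hrankRe hW')
  have hlt := hbound x aΛ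
  rw [key] at hlt
  exact lt_irrefl Λ hlt

end AuxDev

/-- If `κ` is inaccessible, then there is a `κ`-Kurepa subtree `T` of
`^{<κ}κ` all of whose elements take only the values `0` and `1` (i.e. values with at
most one predecessor, so that `T ⊆ ^{<κ}2`) such that `[T]` is not a continuous image
of `^κκ`. -/
theorem exists_binary_kurepa_not_continuous_image
    (κ : Cardinal.{u}) (hin : κ.IsInaccessible) :
    ∃ T : Set (PreFun κ), IsKurepa κ T ∧
      (∀ s ∈ T, ∀ β : {b : K κ // b < s.1}, #{γ : K κ // γ < s.2 β} ≤ 1) ∧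
      ¬ IsContImage κ (branches κ T) := by
  refine ⟨TT hin.1, ⟨TT_subtree hin.1, fun α => ⟨TT_level_nonempty hin.1 α,
    TT_level_card hin α⟩, TT_branches_card hin⟩, TT_binary hin.1, TT_not_contImage hin⟩

end GBaire
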